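/- If a polynomial p with natural coefficients has abstraction vector α(p) whose i-th entry is 0, then p does not depend on the variable Xᵢ (Xᵢ does not appear in p); if the i-th entry is L, then p has the form Xᵢ + r where r does not contain Xᵢ. -/

import Mathlib

/-- The iSAPP algebra of abstract values: `0 < L < A < M`. -/
inductive Val : Type
  | z | L | A | M
  deriving DecidableEq, Repr

instance instFintypeVal : Fintype Val :=
  ⟨⟨↑[Val.z, Val.L, Val.A, Val.M], by decide⟩, fun x => by cases x <;> decide⟩

namespace Val

def toNat : Val → ℕ
  | z => 0 | L => 1 | A => 2 | M => 3

instance : LinearOrder Val := LinearOrder.lift' toNat (by decide)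

/-- The iSAPP addition table: `0` neutral, `L+L = A`, `L+A = A+A = A`, `M` absorbing. -/
def add : Val → Val → Val
  | z, x => x
  | x, z => x
  | M, _ => M
  | _, M => M
  | L, L => A
  | L, A => A
  | A, L => A
  | A, A => A

/-- The iSAPP multiplication table: `0` absorbing, `L` neutral,
`A×A = A`, `A×M = M×A = M×M = M`. -/
def mul : Val → Val → Val
  | z, _ => z
  | _, z => z
  | L, x => x
  | x, L => x
  | A, A => A
  | A, M => M
  | M, A => M
  | M, M => M

end Val

instance : Zero Val := ⟨Val.z⟩
instance : Add Val := ⟨Val.add⟩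
instance : One Val := ⟨Val.L⟩
instance : Mul Val := ⟨Val.mul⟩

instance : CommSemiring Val where
  add := Val.add
  add_assoc := by decide
  zero := Val.z
  zero_add := by decide
  add_zero := by decide
  nsmul := nsmulRec
  add_comm := by decide
  mul := Val.mul
  left_distrib := by decide
  right_distrib := by decide
  zero_mul := by decide
  mul_zero := by decide
  mul_assoc := by decide
  one := Val.L
  one_mul := by decide
  mul_one := by decide
  mul_comm := by decide

open Classical in
/-- Abstraction of a single monomial `c·X^m` (as it appears in the canonical form):
a constant `c` contributes `L` (if `c = 1`) or `A` (if `c > 1`) to the last coordinate;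
a degree-one monomial `c·Xᵢ` contributes `L` (if `c = 1`) or `A` (if `c > 1`) at
coordinate `i`; any other monomial contributes `M` at every involved coordinate
(the product rule `α(q·r) = M·α(q) ∪ M·α(r)`). -/
noncomputable def monoAbs {nv : ℕ} (m : Fin nv →₀ ℕ) (c : ℕ) : Fin (nv + 1) → Val :=
  fun i =>
    if h : (i : ℕ) < nv then
      if m ⟨i, h⟩ = 0 then Val.z
      else if (m.sum fun _ e => e) = 1 then (if c = 1 then Val.L else Val.A)
      else Val.M
    else
      if m = 0 then (if c = 0 then Val.z else if c = 1 then Val.L else Val.A)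
      else if (m.sum fun _ e => e) = 1 then Val.z
      else if 2 ≤ c then Val.M else Val.z

/-- Abstraction of a polynomial, as a vector in `Values^{n+1}`:
the sum (in the `Val` semiring) of the abstractions of its monomials. -/
noncomputable def polAbs {nv : ℕ} (p : MvPolynomial (Fin nv) ℕ) : Fin (nv + 1) → Val :=
  fun i => ∑ m ∈ p.support, monoAbs m (p.coeff m) i


lemma val_add_z {a b : Val} (h : a + b = Val.z) : a = Val.z ∧ b = Val.z := by
  revert h; revert a b; decide

lemma val_add_L {a b : Val} (h : a + b = Val.L) :
    (a = Val.L ∧ b = Val.z) ∨ (a = Val.z ∧ b = Val.L) := by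
  revert h; revert a b; decide

lemma val_sum_z {β : Type*} {s : Finset β} {f : β → Val}
    (h : ∑ x ∈ s, f x = Val.z) : ∀ x ∈ s, f x = Val.z := by
  induction s using Finset.cons_induction with
  | empty => simp
  | cons a s ha ih =>
    rw [Finset.sum_cons] at h
    obtain ⟨h1, h2⟩ := val_add_z h
    intro x hx
    rcases Finset.mem_cons.mp hx with rfl | hx
    · exact h1
    · exact ih h2 x hx

lemma val_sum_L {β : Type*} {s : Finset β} {f : β → Val}
    (h : ∑ x ∈ s, f x = Val.L) :
    ∃ a ∈ s, f a = Val.L ∧ ∀ b ∈ s, b ≠ a → f b = Val.z := by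
  induction s using Finset.cons_induction with
  | empty => rw [Finset.sum_empty] at h; exact absurd h (by decide)
  | cons a s ha ih =>
    rw [Finset.sum_cons] at h
    rcases val_add_L h with ⟨h1, h2⟩ | ⟨h1, h2⟩
    · refine ⟨a, Finset.mem_cons_self a s, h1, ?_⟩
      intro b hb hba
      rcases Finset.mem_cons.mp hb with rfl | hb
      · exact absurd rfl hba
      · exact val_sum_z h2 b hb
    · obtain ⟨c, hc, hcL, hzz⟩ := ih h2
      refine ⟨c, Finset.mem_cons_of_mem hc, hcL, ?_⟩
      intro b hb hbc
      rcases Finset.mem_cons.mp hb with rfl | hb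
      · exact h1
      · exact hzz b hb hbc

lemma monoAbs_castSucc {nv : ℕ} (m : Fin nv →₀ ℕ) (c : ℕ) (i : Fin nv) :
    monoAbs m c i.castSucc =
      if m i = 0 then Val.z
      else if (m.sum fun _ e => e) = 1 then (if c = 1 then Val.L else Val.A)
      else Val.M := by
  have h : ((i.castSucc : Fin (nv+1)) : ℕ) < nv := by simp
  have he : (⟨((i.castSucc : Fin (nv+1)) : ℕ), h⟩ : Fin nv) = i := by
    apply Fin.ext; simp
  rw [monoAbs, dif_pos h, he]

lemma single_of_sum_one {nv : ℕ} {m : Fin nv →₀ ℕ} {i : Fin nv}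
    (hi : m i ≠ 0) (hs : (m.sum fun _ e => e) = 1) : m = Finsupp.single i 1 := by
  have hmem : i ∈ m.support := Finsupp.mem_support_iff.mpr hi
  have hsum : ∑ j ∈ m.support, m j = 1 := hs
  ext j
  rcases eq_or_ne j i with rfl | hj
  · have h1 : m j ≤ 1 := hsum ▸ Finset.single_le_sum (fun _ _ => Nat.zero_le _) hmem
    simp only [Finsupp.single_eq_same]
    omega
  · rw [Finsupp.single_eq_of_ne' (Ne.symm hj)]
    by_contra hne
    have hjmem : j ∈ m.support := Finsupp.mem_support_iff.mpr hne
    have hsub : ({i, j} : Finset (Fin nv)) ⊆ m.support := by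
      intro x hx
      rcases Finset.mem_insert.mp hx with rfl | hx
      · exact hmem
      · exact (Finset.mem_singleton.mp hx) ▸ hjmem
    have hle : ∑ x ∈ ({i, j} : Finset (Fin nv)), m x ≤ ∑ x ∈ m.support, m x :=
      Finset.sum_le_sum_of_subset hsub
    rw [Finset.sum_pair (Ne.symm hj), hsum] at hle
    omega

/-- If the `i`-th entry of `α(p)` is `0` then `Xᵢ` does not occur in `p`;
if it is `L` then `p = Xᵢ + r` where `Xᵢ` does not occur in `r`. -/
theorem isapp_polAbs_zero_lin {nv : ℕ} (p : MvPolynomial (Fin nv) ℕ) (i : Fin nv) :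
    (polAbs p i.castSucc = Val.z → ∀ m ∈ p.support, m i = 0) ∧
    (polAbs p i.castSucc = Val.L →
      ∃ r : MvPolynomial (Fin nv) ℕ,
        p = MvPolynomial.X i + r ∧ ∀ m ∈ r.support, m i = 0) := by
  constructor
  · intro h m hm
    simp only [polAbs] at h
    have hzm := val_sum_z h m hm
    by_contra hmi
    rw [monoAbs_castSucc, if_neg hmi] at hzm
    split_ifs at hzm <;> exact absurd hzm (by decide)
  · intro h
    simp only [polAbs] at h
    obtain ⟨m₀, hm₀s, hm₀L, hz⟩ := val_sum_L h
    rw [monoAbs_castSucc] at hm₀L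
    by_cases h1 : m₀ i = 0
    · rw [if_pos h1] at hm₀L; exact absurd hm₀L (by decide)
    rw [if_neg h1] at hm₀L
    by_cases h2 : (m₀.sum fun _ e => e) = 1
    swap
    · rw [if_neg h2] at hm₀L; exact absurd hm₀L (by decide)
    rw [if_pos h2] at hm₀L
    by_cases h3 : p.coeff m₀ = 1
    swap
    · rw [if_neg h3] at hm₀L; exact absurd hm₀L (by decide)
    have hm₀ : m₀ = Finsupp.single i 1 := single_of_sum_one h1 h2
    refine ⟨∑ m ∈ p.support.erase m₀, MvPolynomial.monomial m (p.coeff m), ?_, ?_⟩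
    · have hx : (MvPolynomial.X i : MvPolynomial (Fin nv) ℕ)
          = MvPolynomial.monomial m₀ (p.coeff m₀) := by
        rw [h3, hm₀, MvPolynomial.X]
      calc p = ∑ m ∈ p.support, MvPolynomial.monomial m (p.coeff m) :=
              (MvPolynomial.support_sum_monomial_coeff p).symm
        _ = MvPolynomial.monomial m₀ (p.coeff m₀)
              + ∑ m ∈ p.support.erase m₀, MvPolynomial.monomial m (p.coeff m) :=
              (Finset.add_sum_erase _ _ hm₀s).symm
        _ = _ := by rw [hx]
    · intro m hm
      have hms : m ∈ p.support.erase m₀ := by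
        by_contra hc
        apply MvPolynomial.mem_support_iff.mp hm
        rw [MvPolynomial.coeff_sum]
        apply Finset.sum_eq_zero
        intro b hb
        rw [MvPolynomial.coeff_monomial, if_neg]
        intro hbm; exact hc (hbm ▸ hb)
      have hmp : m ∈ p.support := Finset.mem_of_mem_erase hms
      have hne : m ≠ m₀ := Finset.ne_of_mem_erase hms
      have hzm := hz m hmp hne
      by_contra hmi
      rw [monoAbs_castSucc, if_neg hmi] at hzm
      split_ifs at hzm <;> exact absurd hzm (by decide)
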